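/- The canonical spray of a Lie group G is left-invariantly Riemann metrizable if and only if there exists a positive definite inner product ⟨·,·⟩ on the Lie algebra 𝔤 such that ⟨[a, α], α⟩ = 0 for all a, α ∈ 𝔤. -/

import Mathlib

attribute [local instance] Matrix.linftyOpNormedAddCommGroup Matrix.linftyOpNormedSpace
  Matrix.linftyOpNormedRing Matrix.linftyOpNormedAlgebra

section Aux

open ContinuousLinearMap
set_option synthInstance.maxHeartbeats 1000000
set_option maxHeartbeats 4000000

variable {n : ℕ}

local notation "M" => Matrix (Fin n) (Fin n) ℝ

@[reducible] private noncomputable def matTop : TopologicalSpace M :=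
  @UniformSpace.toTopologicalSpace M (@PseudoMetricSpace.toUniformSpace M
    (@NonUnitalSeminormedRing.toPseudoMetricSpace M (@NonUnitalNormedRing.toNonUnitalSeminormedRing M
      (@NormedRing.toNonUnitalNormedRing M Matrix.linftyOpNormedRing))))

@[reducible] private def matContSMul : @ContinuousSMul M M _
    (@UniformSpace.toTopologicalSpace M (@PseudoMetricSpace.toUniformSpace M
      (@NonUnitalSeminormedRing.toPseudoMetricSpace M (@NonUnitalNormedRing.toNonUnitalSeminormedRing M
        (@NormedRing.toNonUnitalNormedRing M Matrix.linftyOpNormedRing))))) _ :=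
  ContinuousMul.to_continuousSMul

attribute [local instance] matTop matContSMul

private lemma phi_hasFDerivAt (y : Mˣ) (v : M) :
    HasFDerivAt (fun q : M × M => Ring.inverse q.1 * q.2)
      ((Ring.inverse (y : M)) • (snd ℝ M M) +
        ((-(mulLeftRight ℝ M (↑y⁻¹) (↑y⁻¹))).comp (fst ℝ M M)).smulRight v)
      ((y : M), v) :=
  ((by exact (hasFDerivAt_ringInverse (𝕜 := ℝ) y).comp ((y : M), v) (hasFDerivAt_fst (𝕜 := ℝ) (p := ((y : M), v))) :
      HasFDerivAt (fun q : M × M => Ring.inverse q.1)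
        (-(mulLeftRight ℝ M (↑y⁻¹) (↑y⁻¹)) ∘L (fst ℝ M M)) ((y : M), v)).mul'
    (hasFDerivAt_snd)).congr_fderiv (ContinuousLinearMap.ext fun z => by simp)

private lemma theta_hasFDerivAt (y : Mˣ) (v w : M) :
    HasFDerivAt (fun q : M × M => Ring.inverse q.1 * w)
      (((-(mulLeftRight ℝ M (↑y⁻¹) (↑y⁻¹))).comp (fst ℝ M M)).smulRight w)
      ((y : M), v) :=
  ((by exact (hasFDerivAt_ringInverse (𝕜 := ℝ) y).comp ((y : M), v) (hasFDerivAt_fst (𝕜 := ℝ) (p := ((y : M), v))) :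
      HasFDerivAt (fun q : M × M => Ring.inverse q.1)
        (-(mulLeftRight ℝ M (↑y⁻¹) (↑y⁻¹)) ∘L (fst ℝ M M)) ((y : M), v)).mul_const' w
    ).congr_fderiv (ContinuousLinearMap.ext fun z => by simp)

private lemma energy_hasFDerivAt (Bc : M →L[ℝ] M →L[ℝ] ℝ) (y : Mˣ) (v : M) :
    HasFDerivAt
      (fun q : M × M => (1/2 : ℝ) * Bc (Ring.inverse q.1 * q.2) (Ring.inverse q.1 * q.2))
      ((1/2 : ℝ) • (Bc.precompR (M × M) (Ring.inverse ((y : M), v).1 * ((y : M), v).2)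
          ((Ring.inverse (y : M)) • (snd ℝ M M) +
            ((-(mulLeftRight ℝ M (↑y⁻¹) (↑y⁻¹))).comp (fst ℝ M M)).smulRight v)
        + Bc.precompL (M × M)
          ((Ring.inverse (y : M)) • (snd ℝ M M) +
            ((-(mulLeftRight ℝ M (↑y⁻¹) (↑y⁻¹))).comp (fst ℝ M M)).smulRight v)
          (Ring.inverse ((y : M), v).1 * ((y : M), v).2)))
      ((y : M), v) :=
  (Bc.hasFDerivAt_of_bilinear (phi_hasFDerivAt y v) (phi_hasFDerivAt y v)).const_mul (1/2 : ℝ)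

private lemma energy_fderiv_apply (Bc : M →L[ℝ] M →L[ℝ] ℝ) (y : Mˣ) (v w : M) :
    fderiv ℝ (fun q : M × M => (1/2 : ℝ) * Bc (Ring.inverse q.1 * q.2) (Ring.inverse q.1 * q.2))
      ((y : M), v) (0, w)
    = (1/2 : ℝ) * (Bc ((↑y⁻¹ : M) * v) ((↑y⁻¹ : M) * w) + Bc ((↑y⁻¹ : M) * w) ((↑y⁻¹ : M) * v)) := by
  rw [(energy_hasFDerivAt Bc y v).fderiv]
  simp [Ring.inverse_unit]
  ring

private lemma EL_eval (Bc : M →L[ℝ] M →L[ℝ] ℝ) (x : Mˣ) (v w : M) :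
    fderiv ℝ
        (fun p : M × M =>
          fderiv ℝ (fun q : M × M =>
            (1/2 : ℝ) * Bc (Ring.inverse q.1 * q.2) (Ring.inverse q.1 * q.2)) p (0, w))
        ((x : M), v) (v, v * (↑x⁻¹ : M) * v)
      - fderiv ℝ (fun q : M × M =>
          (1/2 : ℝ) * Bc (Ring.inverse q.1 * q.2) (Ring.inverse q.1 * q.2))
        ((x : M), v) (w, 0)
    = (1/2 : ℝ) *
        (Bc ((↑x⁻¹ : M) * v) ((↑x⁻¹ : M) * w * ((↑x⁻¹ : M) * v) - (↑x⁻¹ : M) * v * ((↑x⁻¹ : M) * w))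
        + Bc ((↑x⁻¹ : M) * w * ((↑x⁻¹ : M) * v) - (↑x⁻¹ : M) * v * ((↑x⁻¹ : M) * w))
            ((↑x⁻¹ : M) * v)) := by
  have hU : IsOpen {p : M × M | IsUnit p.1} := Units.isOpen.preimage continuous_fst
  have hmem : ((x : M), v) ∈ {p : M × M | IsUnit p.1} := ⟨x, rfl⟩
  have hev : (fun p : M × M =>
      fderiv ℝ (fun q : M × M =>
        (1/2 : ℝ) * Bc (Ring.inverse q.1 * q.2) (Ring.inverse q.1 * q.2)) p (0, w))
      =ᶠ[nhds ((x : M), v)]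
      (fun p : M × M => (1/2 : ℝ) *
        (Bc (Ring.inverse p.1 * p.2) (Ring.inverse p.1 * w)
          + Bc (Ring.inverse p.1 * w) (Ring.inverse p.1 * p.2))) := by
    filter_upwards [hU.mem_nhds hmem] with p hp
    obtain ⟨u, hu⟩ := hp
    have h := energy_fderiv_apply Bc u p.2 w
    rw [hu, Prod.mk.eta] at h
    rw [h, ← hu, Ring.inverse_unit]
  rw [hev.fderiv_eq]
  have hG : HasFDerivAt
      (fun p : M × M => (1/2 : ℝ) *
        (Bc (Ring.inverse p.1 * p.2) (Ring.inverse p.1 * w)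
          + Bc (Ring.inverse p.1 * w) (Ring.inverse p.1 * p.2)))
      ((1/2 : ℝ) • ((Bc.precompR (M × M) (Ring.inverse ((x : M), v).1 * ((x : M), v).2)
            (((-(mulLeftRight ℝ M (↑x⁻¹) (↑x⁻¹))).comp (fst ℝ M M)).smulRight w)
          + Bc.precompL (M × M)
            ((Ring.inverse (x : M)) • (snd ℝ M M) +
              ((-(mulLeftRight ℝ M (↑x⁻¹) (↑x⁻¹))).comp (fst ℝ M M)).smulRight v)
            (Ring.inverse ((x : M), v).1 * w))
        + (Bc.precompR (M × M) (Ring.inverse ((x : M), v).1 * w)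
            ((Ring.inverse (x : M)) • (snd ℝ M M) +
              ((-(mulLeftRight ℝ M (↑x⁻¹) (↑x⁻¹))).comp (fst ℝ M M)).smulRight v)
          + Bc.precompL (M × M)
            (((-(mulLeftRight ℝ M (↑x⁻¹) (↑x⁻¹))).comp (fst ℝ M M)).smulRight w)
            (Ring.inverse ((x : M), v).1 * ((x : M), v).2))))
      ((x : M), v) :=
    ((Bc.hasFDerivAt_of_bilinear (phi_hasFDerivAt x v) (theta_hasFDerivAt x v w)).add
      (Bc.hasFDerivAt_of_bilinear (theta_hasFDerivAt x v w) (phi_hasFDerivAt x v))).const_mul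
      (1/2 : ℝ)
  rw [hG.fderiv, (energy_hasFDerivAt Bc x v).fderiv]
  simp [Ring.inverse_unit, mul_assoc, map_sub, map_add, map_neg, sub_eq_zero]
  ring

private noncomputable def toCLM2 (B : LinearMap.BilinForm ℝ M) : M →L[ℝ] M →L[ℝ] ℝ :=
  LinearMap.toContinuousLinearMap
    { toFun := fun a => LinearMap.toContinuousLinearMap (B a)
      map_add' := fun a b => by ext c; simp
      map_smul' := fun r a => by ext c; simp }

private lemma toCLM2_apply (B : LinearMap.BilinForm ℝ M) (a b : M) :
    toCLM2 B a b = B a b := by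
  simp [toCLM2]

private lemma key (B : LinearMap.BilinForm ℝ M) (hsymm : ∀ a b, B a b = B b a)
    (x : Mˣ) (v w : M) :
    fderiv ℝ
        (fun p : M × M =>
          fderiv ℝ (fun q : M × M => (1/2 : ℝ) * B (q.1⁻¹ * q.2) (q.1⁻¹ * q.2)) p (0, w))
        ((x : M), v) (v, v * (↑x⁻¹ : M) * v)
      - fderiv ℝ (fun q : M × M => (1/2 : ℝ) * B (q.1⁻¹ * q.2) (q.1⁻¹ * q.2))
        ((x : M), v) (w, 0)
    = B ((↑x⁻¹ : M) * w * ((↑x⁻¹ : M) * v) - (↑x⁻¹ : M) * v * ((↑x⁻¹ : M) * w))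
        ((↑x⁻¹ : M) * v) := by
  have hfun : (fun q : M × M => (1/2 : ℝ) * B (q.1⁻¹ * q.2) (q.1⁻¹ * q.2))
      = fun q : M × M => (1/2 : ℝ) * toCLM2 B (Ring.inverse q.1 * q.2) (Ring.inverse q.1 * q.2) := by
    funext q
    rw [Matrix.nonsing_inv_eq_ringInverse, toCLM2_apply]
  simp only [hfun]
  rw [EL_eval, toCLM2_apply, toCLM2_apply,
    hsymm ((↑x⁻¹ : M) * v)]
  ring

end Aux

/-- The canonical spray of a (matrix) Lie group `G` is left-invariantly Riemann
metrizable if and only if there exists a positive definite inner product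
`⟨·,·⟩` on the Lie algebra `𝔤` such that `⟨[a, α], α⟩ = 0` for all `a, α ∈ 𝔤`.
Left-invariant Riemannian metrics on `G` correspond to inner products `B` on
`𝔤`; metrizability means the associated left-invariant energy Lagrangian
`E(x, v) = ½ B(x⁻¹v, x⁻¹v)` satisfies the Euler-Lagrange equation associated to
the canonical spray `S_(x,y) = (y, y x⁻¹ y)` (the Euler-Lagrange form being
semi-basic with components `ω_E(w) = S(∂E/∂y in direction w) - ∂E/∂x in
direction w`).  Here `𝔤 = 𝔤𝔩(n, ℝ)` with `[a, α] = aα - αa`. -/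
theorem leftInvariant_metrizable_iff_inner_bracket {n : ℕ} :
    -- left-invariant Riemann metrizability of the canonical spray
    (∃ B : LinearMap.BilinForm ℝ (Matrix (Fin n) (Fin n) ℝ),
      (∀ a b, B a b = B b a) ∧ (∀ a, a ≠ 0 → 0 < B a a) ∧
      (∀ x : (Matrix (Fin n) (Fin n) ℝ)ˣ, ∀ v w : Matrix (Fin n) (Fin n) ℝ,
        fderiv ℝ
            (fun p : Matrix (Fin n) (Fin n) ℝ × Matrix (Fin n) (Fin n) ℝ =>
              fderiv ℝ
                (fun q : Matrix (Fin n) (Fin n) ℝ × Matrix (Fin n) (Fin n) ℝ =>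
                  (1/2 : ℝ) * B (q.1⁻¹ * q.2) (q.1⁻¹ * q.2)) p (0, w))
            ((x : Matrix (Fin n) (Fin n) ℝ), v)
            (v, v * (↑x⁻¹ : Matrix (Fin n) (Fin n) ℝ) * v)
          - fderiv ℝ
            (fun q : Matrix (Fin n) (Fin n) ℝ × Matrix (Fin n) (Fin n) ℝ =>
              (1/2 : ℝ) * B (q.1⁻¹ * q.2) (q.1⁻¹ * q.2))
            ((x : Matrix (Fin n) (Fin n) ℝ), v) (w, 0) = 0)) ↔
    -- existence of an inner product on `𝔤` with `⟨[a,α],α⟩ = 0`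
    (∃ B : LinearMap.BilinForm ℝ (Matrix (Fin n) (Fin n) ℝ),
      (∀ a b, B a b = B b a) ∧ (∀ a, a ≠ 0 → 0 < B a a) ∧
      (∀ a α : Matrix (Fin n) (Fin n) ℝ, B (a * α - α * a) α = 0)) := by
  constructor
  · rintro ⟨B, hsymm, hpos, hEL⟩
    refine ⟨B, hsymm, hpos, fun a α => ?_⟩
    have h := hEL 1 α a
    erw [key B hsymm 1 α a] at h
    simpa using h
  · rintro ⟨B, hsymm, hpos, hb⟩
    refine ⟨B, hsymm, hpos, fun x v w => ?_⟩
    erw [key B hsymm x v w]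
    exact hb _ _
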